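/- (The integral is well defined.) Let X be a Dedekind complete Riesz space with strong unit e, let (G, Σ, μ) be as in the context, and let F be a free filter on ℕ. Let f : G → X, and for j = 1, 2 let (f_n^j)_{n∈ℕ} be sequences in L* that are equi-absolutely continuous with respect to the modular ι and F and that μ-converge to f (relative to F). Suppose l₁, l₂ : Σ → X satisfy: for j = 1, 2 there is an (o)-sequence (σ_p^j) in X such that for every p, {n ∈ ℕ : |∫_A f_n^j dμ − l_j(A)| ≤ σ_p^j for every A ∈ Σ} ∈ F. Then l₁(A) = l₂(A) for every A ∈ Σ. -/

import Mathlib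

open scoped ENNReal

/-- An `(o)`-sequence in a lattice-ordered group: a decreasing sequence of nonnegative
elements whose infimum is `0`. -/
def IsOSeq {α : Type*} [Lattice α] [AddCommGroup α] (σ : ℕ → α) : Prop :=
  Antitone σ ∧ (∀ p, 0 ≤ σ p) ∧ IsGLB (Set.range σ) 0

/-- `f` belongs to `L*`: it is simple (finite range, measurable level sets) and vanishes
outside a set of finite measure. -/
def MemLStar {X G : Type*} [Zero X] [MeasurableSpace G] (μ : Set G → ℝ≥0∞) (f : G → X) : Prop :=
  (Set.range f).Finite ∧ (∀ x : X, MeasurableSet (f ⁻¹' {x})) ∧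
    ∃ S : Set G, MeasurableSet S ∧ μ S < ⊤ ∧ ∀ t ∉ S, f t = 0

/-- The elementary integral `∫_A f dμ = Σ_{x} μ(A ∩ f⁻¹{x}) • x` of a simple function. -/
noncomputable def elemInt {X G : Type*} [AddCommGroup X] [Module ℝ X] [MeasurableSpace G]
    (μ : Set G → ℝ≥0∞) (A : Set G) (f : G → X) : X :=
  ∑ᶠ x : X, (μ (A ∩ f ⁻¹' {x})).toReal • x

/-- The modular `ι(f) = ∫_G |f| dμ` on `L*`. -/
noncomputable def iota {X G : Type*} [Lattice X] [AddCommGroup X] [Module ℝ X]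
    [MeasurableSpace G] (μ : Set G → ℝ≥0∞) (f : G → X) : X :=
  elemInt μ Set.univ fun t => |f t|

/-- The sequence `f z : G → X` `μ`-converges to `g : G → X` relative to the filter `F`. -/
def MuConv {X G : Type*} [Lattice X] [AddCommGroup X] [Module ℝ X] [MeasurableSpace G]
    (μ : Set G → ℝ≥0∞) (F : Filter ℕ) (e : X) (f : ℕ → G → X) (g : G → X) : Prop :=
  ∃ ε : ℕ → ℝ, IsOSeq ε ∧ ∃ σ : ℕ → ℝ, IsOSeq σ ∧
    ∃ A : ℕ → ℕ → Set G, (∀ z p, MeasurableSet (A z p)) ∧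
      (∀ z p, {t : G | ¬ |f z t - g t| ≤ ε p • e} ⊆ A z p) ∧
      (∀ p, {z : ℕ | μ (A z p) ≤ ENNReal.ofReal (σ p)} ∈ F)

/-- The sequence `f z : G → X` is equi-absolutely continuous with respect to the modular `ι`
and the filter `F`. -/
def EquiACIota {X G : Type*} [Lattice X] [AddCommGroup X] [Module ℝ X] [MeasurableSpace G]
    (μ : Set G → ℝ≥0∞) (F : Filter ℕ) (f : ℕ → G → X) : Prop :=
  ∃ α : ℝ, 0 < α ∧
    (∀ σ : ℕ → ℝ, IsOSeq σ → ∃ w : ℕ → X, IsOSeq w ∧ ∃ Ξ : ℕ → Set ℕ,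
      (∀ p, Ξ p ∈ F) ∧
      ∀ p : ℕ, ∀ z ∈ Ξ p, ∀ B : Set G, MeasurableSet B → μ B ≤ ENNReal.ofReal (σ p) →
        iota μ (Set.indicator B fun t => α • f z t) ≤ w p) ∧
    (∃ r : ℕ → X, IsOSeq r ∧ ∃ B : ℕ → Set G, (∀ m, MeasurableSet (B m) ∧ μ (B m) < ⊤) ∧
      ∀ m : ℕ, {z : ℕ | iota μ (Set.indicator (B m)ᶜ fun t => α • f z t) ≤ r m} ∈ F)


section Helpers

open Set

variable {X G : Type*} [Lattice X] [AddCommGroup X]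
  [CovariantClass X X (· + ·) (· ≤ ·)] [Module ℝ X] [PosSMulMono ℝ X]
  [MeasurableSpace G]

/-! ### Order and smul helpers -/

lemma eq_zero_of_abs_le_zero {a : X} (h : |a| ≤ 0) : a = 0 :=
  le_antisymm ((le_abs_self a).trans h) (neg_nonpos.mp ((neg_le_abs a).trans h))

lemma smul_le_smul_e {a b : ℝ} {v : X} (h : a ≤ b) (hv : 0 ≤ v) : a • v ≤ b • v :=
  sub_nonneg.mp (by rw [← sub_smul]; exact smul_nonneg (sub_nonneg.mpr h) hv)

lemma smul_sup_of_nonneg {c : ℝ} (hc : 0 ≤ c) (a b : X) : c • (a ⊔ b) = c • a ⊔ c • b := by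
  rcases hc.eq_or_lt with h | h
  · simp [← h]
  · refine le_antisymm ?_ (sup_le (smul_le_smul_of_nonneg_left le_sup_left hc)
      (smul_le_smul_of_nonneg_left le_sup_right hc))
    have h1 : a ⊔ b ≤ c⁻¹ • (c • a ⊔ c • b) := by
      refine sup_le ?_ ?_
      · calc a = c⁻¹ • (c • a) := (inv_smul_smul₀ h.ne' a).symm
          _ ≤ c⁻¹ • (c • a ⊔ c • b) :=
            smul_le_smul_of_nonneg_left le_sup_left (by positivity)
      · calc b = c⁻¹ • (c • b) := (inv_smul_smul₀ h.ne' b).symm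
          _ ≤ c⁻¹ • (c • a ⊔ c • b) :=
            smul_le_smul_of_nonneg_left le_sup_right (by positivity)
    calc c • (a ⊔ b) ≤ c • (c⁻¹ • (c • a ⊔ c • b)) := smul_le_smul_of_nonneg_left h1 hc
      _ = c • a ⊔ c • b := smul_inv_smul₀ h.ne' _

lemma abs_smul_of_nonneg {c : ℝ} (hc : 0 ≤ c) (a : X) : |c • a| = c • |a| := by
  rw [abs, abs, ← smul_neg, ← smul_sup_of_nonneg hc]

lemma sum_le_sum'' {ι : Type*} {s : Finset ι} {f g : ι → X} (h : ∀ i ∈ s, f i ≤ g i) :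
    ∑ i ∈ s, f i ≤ ∑ i ∈ s, g i := by
  induction s using Finset.cons_induction with
  | empty => simp
  | cons a s ha ih =>
    rw [Finset.sum_cons, Finset.sum_cons]
    exact add_le_add (h a (Finset.mem_cons_self a s))
      (ih fun i hi => h i (Finset.mem_cons_of_mem hi))

lemma abs_sum_le' {ι : Type*} (s : Finset ι) (f : ι → X) :
    |∑ i ∈ s, f i| ≤ ∑ i ∈ s, |f i| := by
  induction s using Finset.cons_induction with
  | empty => simp
  | cons a s ha ih =>
    rw [Finset.sum_cons, Finset.sum_cons]
    exact (abs_add_le _ _).trans (add_le_add_right ih _)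

/-! ### Finitely additive measure helpers -/

variable (μ : Set G → ℝ≥0∞)

lemma mu_mono (hμ0 : μ ∅ = 0)
    (hμadd : ∀ A B : Set G, MeasurableSet A → MeasurableSet B → Disjoint A B →
      μ (A ∪ B) = μ A + μ B)
    {A B : Set G} (hA : MeasurableSet A) (hB : MeasurableSet B) (h : A ⊆ B) :
    μ A ≤ μ B := by
  have hBA : μ B = μ A + μ (B \ A) := by
    rw [← hμadd A (B \ A) hA (hB.diff hA) Set.disjoint_sdiff_right, Set.union_diff_cancel h]
  rw [hBA]; exact le_self_add

lemma mu_union_le (hμ0 : μ ∅ = 0)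
    (hμadd : ∀ A B : Set G, MeasurableSet A → MeasurableSet B → Disjoint A B →
      μ (A ∪ B) = μ A + μ B)
    {A B : Set G} (hA : MeasurableSet A) (hB : MeasurableSet B) :
    μ (A ∪ B) ≤ μ A + μ B := by
  have h1 : A ∪ B = A ∪ (B \ A) := (Set.union_diff_self).symm
  rw [h1, hμadd A (B \ A) hA (hB.diff hA) Set.disjoint_sdiff_right]
  exact add_le_add_right (mu_mono μ hμ0 hμadd (hB.diff hA) hB Set.diff_subset) _

lemma mu_sum (hμ0 : μ ∅ = 0)
    (hμadd : ∀ A B : Set G, MeasurableSet A → MeasurableSet B → Disjoint A B →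
      μ (A ∪ B) = μ A + μ B)
    {ι : Type*} (s : Finset ι) (E : ι → Set G)
    (hmeas : ∀ i ∈ s, MeasurableSet (E i))
    (hdisj : ∀ i ∈ s, ∀ j ∈ s, i ≠ j → Disjoint (E i) (E j)) :
    μ (⋃ i ∈ s, E i) = ∑ i ∈ s, μ (E i) := by
  classical
  induction s using Finset.cons_induction with
  | empty => simpa using hμ0
  | cons a s ha ih =>
    have hU : (⋃ i ∈ Finset.cons a s ha, E i) = E a ∪ ⋃ i ∈ s, E i := by
      simp [Set.iUnion_iUnion_eq_or_left]
    have hmeas' : ∀ i ∈ s, MeasurableSet (E i) := fun i hi =>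
      hmeas i (Finset.mem_cons_of_mem hi)
    have hdisj' : ∀ i ∈ s, ∀ j ∈ s, i ≠ j → Disjoint (E i) (E j) := fun i hi j hj =>
      hdisj i (Finset.mem_cons_of_mem hi) j (Finset.mem_cons_of_mem hj)
    have hd : Disjoint (E a) (⋃ i ∈ s, E i) := by
      rw [Set.disjoint_left]
      intro t hta ht
      obtain ⟨i, hi, hti⟩ := Set.mem_iUnion₂.mp ht
      have hne : a ≠ i := fun h => ha (h ▸ hi)
      exact Set.disjoint_left.mp
        (hdisj a (Finset.mem_cons_self a s) i (Finset.mem_cons_of_mem hi) hne) hta hti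
    rw [hU, hμadd _ _ (hmeas a (Finset.mem_cons_self a s))
      (Finset.measurableSet_biUnion s hmeas') hd, ih hmeas' hdisj', Finset.sum_cons]

/-! ### Simple functions -/

/-- A simple function: finite range and measurable level sets. -/
def Splx (f : G → X) : Prop :=
  (Set.range f).Finite ∧ ∀ x : X, MeasurableSet (f ⁻¹' {x})

lemma Splx.comp2 {f g : G → X} (hf : Splx f) (hg : Splx g) (Φ : X → X → X) :
    Splx (fun t => Φ (f t) (g t)) := by
  classical
  constructor
  · refine (Set.Finite.image2 Φ hf.1 hg.1).subset ?_
    rintro _ ⟨t, rfl⟩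
    exact Set.mem_image2_of_mem ⟨t, rfl⟩ ⟨t, rfl⟩
  · intro z
    have hset : (fun t => Φ (f t) (g t)) ⁻¹' {z} =
        ⋃ x ∈ Set.range f, ⋃ y ∈ Set.range g,
          (if Φ x y = z then f ⁻¹' {x} ∩ g ⁻¹' {y} else ∅) := by
      ext t
      simp only [Set.mem_preimage, Set.mem_singleton_iff, Set.mem_iUnion]
      constructor
      · intro h
        refine ⟨f t, ⟨t, rfl⟩, g t, ⟨t, rfl⟩, ?_⟩
        rw [if_pos h]
        exact ⟨rfl, rfl⟩
      · rintro ⟨x, -, y, -, ht⟩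
        split_ifs at ht with h
        · obtain ⟨h1, h2⟩ := ht
          simp only [Set.mem_preimage, Set.mem_singleton_iff] at h1 h2
          rw [h1, h2]; exact h
        · exact absurd ht (Set.notMem_empty t)
    rw [hset]
    refine MeasurableSet.biUnion hf.1.countable fun x _ =>
      MeasurableSet.biUnion hg.1.countable fun y _ => ?_
    split_ifs
    · exact (hf.2 x).inter (hg.2 y)
    · exact MeasurableSet.empty

lemma Splx.comp {f : G → X} (hf : Splx f) (Φ : X → X) : Splx (fun t => Φ (f t)) :=
  hf.comp2 hf (fun x _ => Φ x)

lemma Splx.const (v : X) : Splx (fun _ : G => v) := by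
  constructor
  · exact (Set.finite_singleton v).subset (by rintro _ ⟨t, rfl⟩; exact rfl)
  · intro x
    by_cases h : v = x
    · have : (fun _ : G => v) ⁻¹' {x} = Set.univ := by ext t; simp [h]
      rw [this]; exact MeasurableSet.univ
    · have : (fun _ : G => v) ⁻¹' {x} = ∅ := by ext t; simp [h]
      rw [this]; exact MeasurableSet.empty

lemma Splx.indicator {f : G → X} (hf : Splx f) {B : Set G} (hB : MeasurableSet B) :
    Splx (B.indicator f) := by
  constructor
  · refine (hf.1.union (Set.finite_singleton 0)).subset ?_
    rintro _ ⟨t, rfl⟩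
    by_cases h : t ∈ B
    · exact Or.inl ⟨t, (Set.indicator_of_mem h f).symm⟩
    · exact Or.inr (by simp [Set.indicator_of_notMem h])
  · intro x
    by_cases hx : x = 0
    · subst hx
      have : B.indicator f ⁻¹' {0} = (B ∩ f ⁻¹' {0}) ∪ Bᶜ := by
        ext t
        by_cases h : t ∈ B <;>
          simp [Set.indicator_of_mem, Set.indicator_of_notMem, h]
      rw [this]; exact (hB.inter (hf.2 0)).union hB.compl
    · have : B.indicator f ⁻¹' {x} = B ∩ f ⁻¹' {x} := by
        ext t
        by_cases h : t ∈ B <;>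
          simp [Set.indicator_of_mem, Set.indicator_of_notMem, h, hx, Ne.symm hx]
      rw [this]; exact hB.inter (hf.2 x)

/-! ### The elementary integral -/

lemma elemInt_eq_sum (hμ0 : μ ∅ = 0)
    (hμadd : ∀ A B : Set G, MeasurableSet A → MeasurableSet B → Disjoint A B →
      μ (A ∪ B) = μ A + μ B)
    {ι : Type*} (s : Finset ι) (E : ι → Set G)
    (hmeas : ∀ i ∈ s, MeasurableSet (E i))
    (hdisj : ∀ i ∈ s, ∀ j ∈ s, i ≠ j → Disjoint (E i) (E j))
    (hcov : ∀ t : G, ∃ i ∈ s, t ∈ E i)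
    (φ : ι → X) (f : G → X) (hf : ∀ i ∈ s, ∀ t ∈ E i, f t = φ i)
    {A : Set G} (hA : MeasurableSet A)
    (hfin : ∀ i ∈ s, φ i ≠ 0 → μ (A ∩ E i) < ⊤) :
    elemInt μ A f = ∑ i ∈ s, (μ (A ∩ E i)).toReal • φ i := by
  classical
  have hsupp : Function.support (fun x : X => (μ (A ∩ f ⁻¹' {x})).toReal • x)
      ⊆ ↑(s.image φ) := by
    intro x hx
    simp only [Function.mem_support] at hx
    by_contra hxs
    have hempty : A ∩ f ⁻¹' {x} = ∅ := by
      ext t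
      simp only [Set.mem_inter_iff, Set.mem_preimage, Set.mem_singleton_iff,
        Set.mem_empty_iff_false, iff_false, not_and]
      intro _ hft
      obtain ⟨i, hi, hti⟩ := hcov t
      exact hxs (Finset.mem_coe.mpr
        (Finset.mem_image.mpr ⟨i, hi, by rw [← hf i hi t hti, hft]⟩))
    rw [hempty, hμ0] at hx
    simp at hx
  rw [elemInt, finsum_eq_finset_sum_of_support_subset _ hsupp,
    ← Finset.sum_fiberwise_of_maps_to (fun i hi => Finset.mem_image_of_mem φ hi)
      (fun i => (μ (A ∩ E i)).toReal • φ i)]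
  refine Finset.sum_congr rfl fun x hx => ?_
  by_cases hx0 : x = 0
  · subst hx0
    rw [smul_zero, eq_comm]
    refine Finset.sum_eq_zero fun i hi => ?_
    rw [(Finset.mem_filter.mp hi).2, smul_zero]
  · have hdecomp : A ∩ f ⁻¹' {x} = ⋃ i ∈ s.filter (fun i => φ i = x), (A ∩ E i) := by
      ext t
      simp only [Set.mem_iUnion, Finset.mem_filter, Set.mem_inter_iff, Set.mem_preimage,
        Set.mem_singleton_iff]
      constructor
      · rintro ⟨htA, htf⟩
        obtain ⟨i, hi, hti⟩ := hcov t
        exact ⟨i, ⟨⟨hi, by rw [← hf i hi t hti, htf]⟩, htA, hti⟩⟩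
      · rintro ⟨i, ⟨hi, hφ⟩, htA, hti⟩
        exact ⟨htA, by rw [hf i hi t hti, hφ]⟩
    rw [hdecomp, mu_sum μ hμ0 hμadd _ _
      (fun i hi => hA.inter (hmeas i (Finset.mem_filter.mp hi).1))
      (fun i hi j hj hij => Set.disjoint_left.mpr fun t ⟨_, hti⟩ ⟨_, htj⟩ =>
        Set.disjoint_left.mp
          (hdisj i (Finset.mem_filter.mp hi).1 j (Finset.mem_filter.mp hj).1 hij) hti htj),
      ENNReal.toReal_sum (fun i hi =>
        (hfin i (Finset.mem_filter.mp hi).1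
          (by rw [(Finset.mem_filter.mp hi).2]; exact hx0)).ne),
      Finset.sum_smul]
    refine Finset.sum_congr rfl fun i hi => ?_
    rw [(Finset.mem_filter.mp hi).2]

end Helpers


section ElemIntLemmas

open Set

variable {X G : Type*} [Lattice X] [AddCommGroup X]
  [CovariantClass X X (· + ·) (· ≤ ·)] [Module ℝ X] [PosSMulMono ℝ X]
  [MeasurableSpace G]
  (μ : Set G → ℝ≥0∞)
  (hμ0 : μ ∅ = 0)
  (hμadd : ∀ A B : Set G, MeasurableSet A → MeasurableSet B → Disjoint A B →
      μ (A ∪ B) = μ A + μ B)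

include hμ0 hμadd

omit hμ0 hμadd in
/-- The joint-range partition data for two simple functions. -/
lemma pair_partition {f g : G → X} (hf : Splx f) (hg : Splx g) :
    (Set.range (fun t => (f t, g t))).Finite :=
  (hf.1.prod hg.1).subset (by rintro _ ⟨t, rfl⟩; exact ⟨⟨t, rfl⟩, ⟨t, rfl⟩⟩)

lemma elemInt_pair_eq {f g : G → X} (hf : Splx f) (hg : Splx g)
    {A : Set G} (hA : MeasurableSet A)
    (hff : ∀ x, x ≠ 0 → μ (A ∩ f ⁻¹' {x}) < ⊤)
    (hfg : ∀ y, y ≠ 0 → μ (A ∩ g ⁻¹' {y}) < ⊤)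
    (Φ : X → X → X) (hΦ : Φ 0 0 = 0) :
    elemInt μ A (fun t => Φ (f t) (g t)) =
      ∑ i ∈ (pair_partition hf hg).toFinset,
        (μ (A ∩ (f ⁻¹' {i.1} ∩ g ⁻¹' {i.2}))).toReal • Φ i.1 i.2 := by
  classical
  set s := (pair_partition hf hg).toFinset with hs
  set E : X × X → Set G := fun i => f ⁻¹' {i.1} ∩ g ⁻¹' {i.2} with hE
  have hmeas : ∀ i ∈ s, MeasurableSet (E i) := fun i _ => (hf.2 i.1).inter (hg.2 i.2)
  have hdisj : ∀ i ∈ s, ∀ j ∈ s, i ≠ j → Disjoint (E i) (E j) := by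
    intro i _ j _ hij
    rw [Set.disjoint_left]
    rintro t ⟨h1, h2⟩ ⟨h3, h4⟩
    simp only [E, Set.mem_preimage, Set.mem_singleton_iff] at h1 h2 h3 h4
    exact hij (Prod.ext (h1.symm.trans h3) (h2.symm.trans h4))
  have hcov : ∀ t : G, ∃ i ∈ s, t ∈ E i := fun t =>
    ⟨(f t, g t), (pair_partition hf hg).mem_toFinset.mpr ⟨t, rfl⟩, ⟨rfl, rfl⟩⟩
  have hval : ∀ i ∈ s, ∀ t ∈ E i, Φ (f t) (g t) = Φ i.1 i.2 := by
    rintro i _ t ⟨h1, h2⟩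
    simp only [Set.mem_preimage, Set.mem_singleton_iff] at h1 h2
    rw [h1, h2]
  have hfin : ∀ i ∈ s, Φ i.1 i.2 ≠ 0 → μ (A ∩ E i) < ⊤ := by
    intro i hi h0
    by_cases h1 : i.1 = 0
    · have h2 : i.2 ≠ 0 := fun h2 => h0 (by rw [h1, h2, hΦ])
      refine lt_of_le_of_lt (mu_mono μ hμ0 hμadd (hA.inter (hmeas i hi))
        (hA.inter (hg.2 i.2)) ?_) (hfg i.2 h2)
      exact Set.inter_subset_inter_right A Set.inter_subset_right
    · refine lt_of_le_of_lt (mu_mono μ hμ0 hμadd (hA.inter (hmeas i hi))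
        (hA.inter (hf.2 i.1)) ?_) (hff i.1 h1)
      exact Set.inter_subset_inter_right A Set.inter_subset_left
  exact elemInt_eq_sum μ hμ0 hμadd s E hmeas hdisj hcov (fun i => Φ i.1 i.2)
    (fun t => Φ (f t) (g t)) hval hA hfin

lemma elemInt_add {f g : G → X} (hf : Splx f) (hg : Splx g)
    {A : Set G} (hA : MeasurableSet A)
    (hff : ∀ x, x ≠ 0 → μ (A ∩ f ⁻¹' {x}) < ⊤)
    (hfg : ∀ y, y ≠ 0 → μ (A ∩ g ⁻¹' {y}) < ⊤) :
    elemInt μ A (fun t => f t + g t) = elemInt μ A f + elemInt μ A g := by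
  have h1 := elemInt_pair_eq μ hμ0 hμadd hf hg hA hff hfg (fun x y => x + y) (by simp)
  have h2 := elemInt_pair_eq μ hμ0 hμadd hf hg hA hff hfg (fun x _ => x) rfl
  have h3 := elemInt_pair_eq μ hμ0 hμadd hf hg hA hff hfg (fun _ y => y) rfl
  rw [h1, h2, h3, ← Finset.sum_add_distrib]
  exact Finset.sum_congr rfl fun i _ => smul_add _ _ _

lemma elemInt_mono {f g : G → X} (hf : Splx f) (hg : Splx g)
    {A : Set G} (hA : MeasurableSet A)
    (hff : ∀ x, x ≠ 0 → μ (A ∩ f ⁻¹' {x}) < ⊤)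
    (hfg : ∀ y, y ≠ 0 → μ (A ∩ g ⁻¹' {y}) < ⊤)
    (hle : ∀ t, f t ≤ g t) :
    elemInt μ A f ≤ elemInt μ A g := by
  have h2 := elemInt_pair_eq μ hμ0 hμadd hf hg hA hff hfg (fun x _ => x) rfl
  have h3 := elemInt_pair_eq μ hμ0 hμadd hf hg hA hff hfg (fun _ y => y) rfl
  rw [h2, h3]
  refine sum_le_sum'' fun i hi => ?_
  obtain ⟨t, ht⟩ := (pair_partition hf hg).mem_toFinset.mp hi
  have h1 : f t = i.1 := congrArg Prod.fst ht
  have h2' : g t = i.2 := congrArg Prod.snd ht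
  exact smul_le_smul_of_nonneg_left (h1 ▸ h2' ▸ hle t) ENNReal.toReal_nonneg

lemma elemInt_map {f : G → X} (hf : Splx f)
    {A : Set G} (hA : MeasurableSet A)
    (hff : ∀ x, x ≠ 0 → μ (A ∩ f ⁻¹' {x}) < ⊤)
    (Φ : X → X) (hΦ : Φ 0 = 0) :
    elemInt μ A (fun t => Φ (f t)) =
      ∑ x ∈ hf.1.toFinset, (μ (A ∩ f ⁻¹' {x})).toReal • Φ x := by
  classical
  refine elemInt_eq_sum μ hμ0 hμadd hf.1.toFinset (fun x => f ⁻¹' {x})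
    (fun x _ => hf.2 x) ?_ ?_ Φ _ ?_ hA ?_
  · intro i _ j _ hij
    rw [Set.disjoint_left]
    intro t h1 h2
    simp only [Set.mem_preimage, Set.mem_singleton_iff] at h1 h2
    exact hij (h1.symm.trans h2)
  · exact fun t => ⟨f t, hf.1.mem_toFinset.mpr ⟨t, rfl⟩, rfl⟩
  · intro i _ t ht
    simp only [Set.mem_preimage, Set.mem_singleton_iff] at ht
    rw [ht]
  · intro i _ h0
    refine hff i fun h => h0 ?_
    rw [h, hΦ]

lemma elemInt_id_eq {f : G → X} (hf : Splx f)
    {A : Set G} (hA : MeasurableSet A)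
    (hff : ∀ x, x ≠ 0 → μ (A ∩ f ⁻¹' {x}) < ⊤) :
    elemInt μ A f = ∑ x ∈ hf.1.toFinset, (μ (A ∩ f ⁻¹' {x})).toReal • x :=
  elemInt_map μ hμ0 hμadd hf hA hff (fun x => x) rfl

lemma elemInt_neg {f : G → X} (hf : Splx f)
    {A : Set G} (hA : MeasurableSet A)
    (hff : ∀ x, x ≠ 0 → μ (A ∩ f ⁻¹' {x}) < ⊤) :
    elemInt μ A (fun t => -(f t)) = -elemInt μ A f := by
  rw [elemInt_map μ hμ0 hμadd hf hA hff Neg.neg neg_zero,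
    elemInt_id_eq μ hμ0 hμadd hf hA hff, ← Finset.sum_neg_distrib]
  exact Finset.sum_congr rfl fun x _ => smul_neg _ _

lemma elemInt_smul (c : ℝ) {f : G → X} (hf : Splx f)
    {A : Set G} (hA : MeasurableSet A)
    (hff : ∀ x, x ≠ 0 → μ (A ∩ f ⁻¹' {x}) < ⊤) :
    elemInt μ A (fun t => c • f t) = c • elemInt μ A f := by
  rw [elemInt_map μ hμ0 hμadd hf hA hff (fun x => c • x) (smul_zero c),
    elemInt_id_eq μ hμ0 hμadd hf hA hff, Finset.smul_sum]
  exact Finset.sum_congr rfl fun x _ => smul_comm _ _ _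

lemma abs_elemInt_le {f : G → X} (hf : Splx f)
    {A : Set G} (hA : MeasurableSet A)
    (hff : ∀ x, x ≠ 0 → μ (A ∩ f ⁻¹' {x}) < ⊤) :
    |elemInt μ A f| ≤ elemInt μ A (fun t => |f t|) := by
  rw [elemInt_map μ hμ0 hμadd hf hA hff (fun x => |x|) abs_zero,
    elemInt_id_eq μ hμ0 hμadd hf hA hff]
  refine (abs_sum_le' _ _).trans (le_of_eq (Finset.sum_congr rfl fun x _ => ?_))
  exact abs_smul_of_nonneg ENNReal.toReal_nonneg x

omit hμ0 hμadd in
lemma elemInt_indicator {B A : Set G} (f : G → X) :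
    elemInt μ A (B.indicator f) = elemInt μ (A ∩ B) f := by
  unfold elemInt
  apply finsum_congr
  intro x
  by_cases hx : x = 0
  · subst hx; simp
  · have : A ∩ B.indicator f ⁻¹' {x} = A ∩ B ∩ f ⁻¹' {x} := by
      ext t
      simp only [Set.mem_inter_iff, Set.mem_preimage, Set.mem_singleton_iff]
      constructor
      · rintro ⟨htA, htx⟩
        by_cases h : t ∈ B
        · rw [Set.indicator_of_mem h] at htx
          exact ⟨⟨htA, h⟩, htx⟩
        · rw [Set.indicator_of_notMem h] at htx
          exact absurd htx.symm hx
      · rintro ⟨⟨htA, htB⟩, htx⟩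
        exact ⟨htA, by rw [Set.indicator_of_mem htB]; exact htx⟩
    rw [this]

omit hμadd in
lemma elemInt_const (A : Set G) (v : X) :
    elemInt μ A (fun _ => v) = (μ A).toReal • v := by
  unfold elemInt
  rw [finsum_eq_single _ v ?_]
  · have : (fun _ : G => v) ⁻¹' {v} = Set.univ := by ext t; simp
    rw [this, Set.inter_univ]
  · intro x hx
    have : (fun _ : G => v) ⁻¹' {x} = ∅ := by ext t; simp [Ne.symm hx]
    rw [this, Set.inter_empty, hμ0]
    simp

end ElemIntLemmas


section IotaLemmas

open Set

variable {X G : Type*} [Lattice X] [AddCommGroup X]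
  [CovariantClass X X (· + ·) (· ≤ ·)] [Module ℝ X] [PosSMulMono ℝ X]
  [MeasurableSpace G]
  (μ : Set G → ℝ≥0∞)
  (hμ0 : μ ∅ = 0)
  (hμadd : ∀ A B : Set G, MeasurableSet A → MeasurableSet B → Disjoint A B →
      μ (A ∪ B) = μ A + μ B)
  {S : Set G} (hSm : MeasurableSet S) (hSf : μ S < ⊤)

include hμ0 hμadd hSm hSf

/-- Fiber-finiteness from a finite-measure support. -/
lemma finfib_of {h : G → X} (hfib : ∀ x : X, MeasurableSet (h ⁻¹' {x}))
    (hsupp : ∀ t, h t ≠ 0 → t ∈ S) {A : Set G} (hA : MeasurableSet A) :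
    ∀ x : X, x ≠ 0 → μ (A ∩ h ⁻¹' {x}) < ⊤ := by
  intro x hx
  refine lt_of_le_of_lt (mu_mono μ hμ0 hμadd (hA.inter (hfib x)) hSm ?_) hSf
  rintro t ⟨-, ht⟩
  have : h t = x := ht
  exact hsupp t (this ▸ hx)

lemma iota_mono {h₁ h₂ : G → X} (hs₁ : Splx h₁) (hs₂ : Splx h₂)
    (hv₁ : ∀ t, h₁ t ≠ 0 → t ∈ S) (hv₂ : ∀ t, h₂ t ≠ 0 → t ∈ S)
    (hle : ∀ t, |h₁ t| ≤ |h₂ t|) : iota μ h₁ ≤ iota μ h₂ := by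
  refine elemInt_mono μ hμ0 hμadd (hs₁.comp abs) (hs₂.comp abs) MeasurableSet.univ
    (finfib_of μ hμ0 hμadd hSm hSf (hs₁.comp abs).2
      (fun t ht => hv₁ t (fun h0 => ht (by rw [h0, abs_zero]))) MeasurableSet.univ)
    (finfib_of μ hμ0 hμadd hSm hSf (hs₂.comp abs).2
      (fun t ht => hv₂ t (fun h0 => ht (by rw [h0, abs_zero]))) MeasurableSet.univ)
    hle

lemma iota_add_le {h₁ h₂ : G → X} (hs₁ : Splx h₁) (hs₂ : Splx h₂)
    (hv₁ : ∀ t, h₁ t ≠ 0 → t ∈ S) (hv₂ : ∀ t, h₂ t ≠ 0 → t ∈ S) :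
    iota μ (fun t => h₁ t + h₂ t) ≤ iota μ h₁ + iota μ h₂ := by
  have ff₁ := finfib_of μ hμ0 hμadd hSm hSf (hs₁.comp abs).2
      (fun t ht => hv₁ t (fun h0 => ht (by rw [h0, abs_zero])))
      (MeasurableSet.univ (α := G))
  have ff₂ := finfib_of μ hμ0 hμadd hSm hSf (hs₂.comp abs).2
      (fun t ht => hv₂ t (fun h0 => ht (by rw [h0, abs_zero])))
      (MeasurableSet.univ (α := G))
  have hsum : Splx (fun t => h₁ t + h₂ t) := hs₁.comp2 hs₂ (fun a b => a + b)
  have ffsum : ∀ x : X, x ≠ 0 →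
      μ (Set.univ ∩ (fun t => |h₁ t| + |h₂ t|) ⁻¹' {x}) < ⊤ := by
    refine finfib_of μ hμ0 hμadd hSm hSf ((hs₁.comp2 hs₂ (fun a b => |a| + |b|)).2) ?_
      MeasurableSet.univ
    intro t ht
    by_cases h1 : h₁ t = 0
    · by_cases h2 : h₂ t = 0
      · exact absurd (by simp [h1, h2]) ht
      · exact hv₂ t h2
    · exact hv₁ t h1
  calc iota μ (fun t => h₁ t + h₂ t)
      ≤ elemInt μ Set.univ (fun t => |h₁ t| + |h₂ t|) := by
        refine elemInt_mono μ hμ0 hμadd (hsum.comp abs)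
          (hs₁.comp2 hs₂ (fun a b => |a| + |b|)) MeasurableSet.univ
          (finfib_of μ hμ0 hμadd hSm hSf (hsum.comp abs).2 ?_ MeasurableSet.univ)
          ffsum (fun t => abs_add_le _ _)
        intro t ht
        by_cases h1 : h₁ t = 0
        · by_cases h2 : h₂ t = 0
          · exact absurd (by simp [h1, h2]) ht
          · exact hv₂ t h2
        · exact hv₁ t h1
    _ = iota μ h₁ + iota μ h₂ := by
        exact elemInt_add μ hμ0 hμadd (hs₁.comp abs) (hs₂.comp abs) MeasurableSet.univ
          (finfib_of μ hμ0 hμadd hSm hSf (hs₁.comp abs).2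
            (fun t ht => hv₁ t (fun h0 => ht (by rw [h0, abs_zero]))) MeasurableSet.univ)
          (finfib_of μ hμ0 hμadd hSm hSf (hs₂.comp abs).2
            (fun t ht => hv₂ t (fun h0 => ht (by rw [h0, abs_zero]))) MeasurableSet.univ)

lemma iota_sub_le {h₁ h₂ : G → X} (hs₁ : Splx h₁) (hs₂ : Splx h₂)
    (hv₁ : ∀ t, h₁ t ≠ 0 → t ∈ S) (hv₂ : ∀ t, h₂ t ≠ 0 → t ∈ S) :
    iota μ (fun t => h₁ t - h₂ t) ≤ iota μ h₁ + iota μ h₂ := by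
  have hneg : iota μ (fun t => -(h₂ t)) = iota μ h₂ := by
    unfold iota
    exact congrArg _ (funext fun t => abs_neg (h₂ t))
  have := iota_add_le μ hμ0 hμadd hSm hSf hs₁ (hs₂.comp Neg.neg) hv₁
    (fun t ht => hv₂ t (fun h0 => ht (by rw [h0, neg_zero])))
  rw [hneg] at this
  simpa [sub_eq_add_neg] using this

lemma iota_smul {c : ℝ} (hc : 0 ≤ c) {h : G → X} (hs : Splx h)
    (hv : ∀ t, h t ≠ 0 → t ∈ S) :
    iota μ (fun t => c • h t) = c • iota μ h := by
  have h1 : iota μ (fun t => c • h t) = elemInt μ Set.univ (fun t => c • |h t|) := by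
    unfold iota
    exact congrArg _ (funext fun t => abs_smul_of_nonneg hc (h t))
  rw [h1, elemInt_smul μ hμ0 hμadd c (hs.comp abs) MeasurableSet.univ
    (finfib_of μ hμ0 hμadd hSm hSf (hs.comp abs).2
      (fun t ht => hv t (fun h0 => ht (by rw [h0, abs_zero]))) MeasurableSet.univ)]
  rfl

lemma abs_elemInt_le_iota {h : G → X} (hs : Splx h)
    (hv : ∀ t, h t ≠ 0 → t ∈ S) {A : Set G} (hA : MeasurableSet A) :
    |elemInt μ A h| ≤ iota μ (A.indicator h) := by
  have h1 : elemInt μ A h = elemInt μ Set.univ (A.indicator h) := by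
    rw [elemInt_indicator, Set.univ_inter]
  have hsupp : ∀ t, A.indicator h t ≠ 0 → t ∈ S := by
    intro t ht
    by_cases hta : t ∈ A
    · exact hv t (by rwa [Set.indicator_of_mem hta] at ht)
    · exact absurd (Set.indicator_of_notMem hta h) ht
  rw [h1]
  exact abs_elemInt_le μ hμ0 hμadd (hs.indicator hA) MeasurableSet.univ
    (finfib_of μ hμ0 hμadd hSm hSf (hs.indicator hA).2 hsupp MeasurableSet.univ)

end IotaLemmas

section OSeqLemmas

variable {α : Type*} [Lattice α] [AddCommGroup α] [CovariantClass α α (· + ·) (· ≤ ·)]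

lemma IsOSeq.add {a b : ℕ → α} (ha : IsOSeq a) (hb : IsOSeq b) :
    IsOSeq (fun p => a p + b p) := by
  refine ⟨fun p q h => add_le_add (ha.1 h) (hb.1 h),
    fun p => add_nonneg (ha.2.1 p) (hb.2.1 p), ?_, ?_⟩
  · rintro x ⟨p, rfl⟩
    exact add_nonneg (ha.2.1 p) (hb.2.1 p)
  · intro c hc
    have h1 : ∀ q, c - b q ≤ 0 := by
      intro q
      refine ha.2.2.2 ?_
      rintro x ⟨p, rfl⟩
      rw [sub_le_iff_le_add]
      calc c ≤ a (max p q) + b (max p q) := hc ⟨max p q, rfl⟩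
        _ ≤ a p + b q := add_le_add (ha.1 (le_max_left p q)) (hb.1 (le_max_right p q))
    have h2 : c ≤ 0 := by
      refine hb.2.2.2 ?_
      rintro x ⟨q, rfl⟩
      exact sub_nonpos.mp (h1 q)
    exact h2

variable [Module ℝ α] [PosSMulMono ℝ α]

lemma IsOSeq.smulc {w : ℕ → α} (hw : IsOSeq w) {c : ℝ} (hc : 0 < c) :
    IsOSeq (fun p => c • w p) := by
  refine ⟨fun p q h => smul_le_smul_of_nonneg_left (hw.1 h) hc.le,
    fun p => smul_nonneg hc.le (hw.2.1 p), ?_, ?_⟩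
  · rintro x ⟨p, rfl⟩
    exact smul_nonneg hc.le (hw.2.1 p)
  · intro d hd
    have h1 : c⁻¹ • d ≤ 0 := by
      refine hw.2.2.2 ?_
      rintro x ⟨p, rfl⟩
      calc c⁻¹ • d ≤ c⁻¹ • (c • w p) :=
            smul_le_smul_of_nonneg_left (hd ⟨p, rfl⟩) (by positivity)
        _ = w p := inv_smul_smul₀ hc.ne' _
    calc d = c • (c⁻¹ • d) := (smul_inv_smul₀ hc.ne' d).symm
      _ ≤ c • (0 : α) := smul_le_smul_of_nonneg_left h1 hc.le
      _ = 0 := smul_zero c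

lemma isOSeq_zero : IsOSeq (fun _ : ℕ => (0 : α)) :=
  ⟨antitone_const, fun _ => le_refl 0, by simpa [Set.range_const] using isGLB_singleton⟩

/-- Archimedean property from Dedekind completeness. -/
lemma arch_le_zero (hDC : ∀ S : Set α, S.Nonempty → BddAbove S → ∃ x, IsLUB S x)
    {e c : α} (he : 0 ≤ e) (hc : 0 ≤ c) (h : ∀ t : ℝ, 0 < t → c ≤ t • e) : c ≤ 0 := by
  have hub : ∀ n : ℕ, (n : ℝ) • c ≤ e := by
    intro n
    rcases Nat.eq_zero_or_pos n with h0 | hpos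
    · subst h0; simpa using he
    · have hn : (0 : ℝ) < n := by exact_mod_cast hpos
      have h1 : c ≤ (n : ℝ)⁻¹ • e := h _ (by positivity)
      calc (n : ℝ) • c ≤ (n : ℝ) • ((n : ℝ)⁻¹ • e) :=
            smul_le_smul_of_nonneg_left h1 hn.le
        _ = e := smul_inv_smul₀ hn.ne' e
  obtain ⟨s, hs⟩ := hDC (Set.range fun n : ℕ => (n : ℝ) • c) ⟨0, 0, by simp⟩
    ⟨e, by rintro x ⟨n, rfl⟩; exact hub n⟩
  have hsub : s ≤ s - c := by
    refine hs.2 ?_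
    rintro x ⟨n, rfl⟩
    rw [le_sub_iff_add_le]
    calc (n : ℝ) • c + c = ((n : ℝ) + 1) • c := by rw [add_smul, one_smul]
      _ = ((n + 1 : ℕ) : ℝ) • c := by push_cast; ring_nf
      _ ≤ s := hs.1 ⟨n + 1, rfl⟩
  have := sub_nonneg.mpr hsub
  have h2 : s + c ≤ s + 0 := by
    rw [add_zero]
    calc s + c = c + s := add_comm s c
      _ ≤ c + (s - c) := add_le_add_right hsub c
      _ = s := by abel
  exact le_of_add_le_add_left h2

lemma isOSeq_smul_e (hDC : ∀ S : Set α, S.Nonempty → BddAbove S → ∃ x, IsLUB S x)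
    {ε : ℕ → ℝ} (hε : IsOSeq ε) {e : α} (he : 0 ≤ e) :
    IsOSeq (fun p => ε p • e) := by
  refine ⟨fun p q h => smul_le_smul_e (hε.1 h) he,
    fun p => smul_nonneg (hε.2.1 p) he, ?_, ?_⟩
  · rintro x ⟨p, rfl⟩
    exact smul_nonneg (hε.2.1 p) he
  · intro d hd
    have hkey : ∀ t : ℝ, 0 < t → d ⊔ 0 ≤ t • e := by
      intro t ht
      have hex : ∃ p, ε p < t := by
        by_contra hno
        push_neg at hno
        have : t ≤ 0 := hε.2.2.2 (by rintro x ⟨p, rfl⟩; exact hno p)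
        linarith
      obtain ⟨p, hp⟩ := hex
      refine sup_le ((hd ⟨p, rfl⟩).trans (smul_le_smul_e hp.le he))
        (smul_nonneg ht.le he)
    have h1 : d ⊔ 0 ≤ 0 := arch_le_zero hDC he le_sup_right hkey
    exact le_sup_left.trans h1

lemma IsOSeq.mul_const {ε : ℕ → ℝ} (hε : IsOSeq ε) {K : ℝ} (hK : 0 ≤ K) :
    IsOSeq (fun p => ε p * K) := by
  rcases hK.eq_or_lt with h | h
  · simpa [← h] using (isOSeq_zero (α := ℝ))
  · have := hε.smulc h
    have heq : (fun p => ε p * K) = fun p => K • ε p := by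
      funext p; rw [smul_eq_mul, mul_comm]
    rw [heq]
    exact this

end OSeqLemmas

/-- **The integral is well defined.** If two defining sequences in `L*` (equi-absolutely
continuous with respect to `ι` and `μ`-convergent to `f`) have integrals converging
`(o_F)`-uniformly to set functions `l₁` and `l₂` respectively, then `l₁ = l₂`. -/
theorem integral_well_defined
    {X G : Type*} [Lattice X] [AddCommGroup X]
    [CovariantClass X X (· + ·) (· ≤ ·)] [Module ℝ X] [PosSMulMono ℝ X]
    [MeasurableSpace G]
    -- Dedekind completeness of X
    (hDC : ∀ S : Set X, S.Nonempty → BddAbove S → ∃ x, IsLUB S x)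
    -- strong unit e
    (e : X) (he : 0 < e) (hstrong : ∀ x : X, ∃ c : ℝ, 0 < c ∧ |x| ≤ c • e)
    -- finitely additive measure μ : Σ → [0,∞]
    (μ : Set G → ℝ≥0∞) (hμ0 : μ ∅ = 0)
    (hμadd : ∀ A B : Set G, MeasurableSet A → MeasurableSet B → Disjoint A B →
      μ (A ∪ B) = μ A + μ B)
    -- F is a free filter on ℕ
    (F : Filter ℕ) (hFproper : F.NeBot) (hFfree : F ≤ Filter.cofinite)
    -- the target function and the two defining sequences
    (f : G → X) (f₁ f₂ : ℕ → G → X)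
    (hmem₁ : ∀ n, MemLStar μ (f₁ n)) (hmem₂ : ∀ n, MemLStar μ (f₂ n))
    (hEAC₁ : EquiACIota μ F f₁) (hEAC₂ : EquiACIota μ F f₂)
    (hconv₁ : MuConv μ F e f₁ f) (hconv₂ : MuConv μ F e f₂ f)
    -- the two limit set functions
    (l₁ l₂ : Set G → X)
    (σ₁ : ℕ → X) (hσ₁ : IsOSeq σ₁)
    (hl₁ : ∀ p : ℕ,
      {n : ℕ | ∀ A : Set G, MeasurableSet A → |elemInt μ A (f₁ n) - l₁ A| ≤ σ₁ p} ∈ F)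
    (σ₂ : ℕ → X) (hσ₂ : IsOSeq σ₂)
    (hl₂ : ∀ p : ℕ,
      {n : ℕ | ∀ A : Set G, MeasurableSet A → |elemInt μ A (f₂ n) - l₂ A| ≤ σ₂ p} ∈ F) :
    ∀ A : Set G, MeasurableSet A → l₁ A = l₂ A := by
  classical
  have he' : (0 : X) ≤ e := he.le
  obtain ⟨α₁, hα₁, hC1₁, r₁, hr₁, B₁, hB₁, hB₁F⟩ := hEAC₁
  obtain ⟨α₂, hα₂, hC1₂, r₂, hr₂, B₂, hB₂, hB₂F⟩ := hEAC₂
  obtain ⟨ε₁, hε₁, sc₁, hsc₁, A₁, hA₁m, hA₁s, hA₁F⟩ := hconv₁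
  obtain ⟨ε₂, hε₂, sc₂, hsc₂, A₂, hA₂m, hA₂s, hA₂F⟩ := hconv₂
  obtain ⟨w₁, hw₁, Ξ₁, hΞ₁F, hΞ₁⟩ := hC1₁ (fun p => sc₁ p + sc₂ p) (hsc₁.add hsc₂)
  obtain ⟨w₂, hw₂, Ξ₂, hΞ₂F, hΞ₂⟩ := hC1₂ (fun p => sc₁ p + sc₂ p) (hsc₁.add hsc₂)
  intro A hA
  have key : ∀ m p : ℕ, |l₁ A - l₂ A| ≤
      (σ₁ p + σ₂ p + (1/α₁) • w₁ p + (1/α₂) • w₂ p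
        + ((ε₁ p + ε₂ p) * (μ (B₁ m ∪ B₂ m)).toReal) • e)
      + ((1/α₁) • r₁ m + (1/α₂) • r₂ m) := by
    intro m p
    haveI := hFproper
    have hNmem := Filter.inter_mem (hl₁ p) (Filter.inter_mem (hl₂ p)
      (Filter.inter_mem (hA₁F p) (Filter.inter_mem (hA₂F p)
      (Filter.inter_mem (hΞ₁F p) (Filter.inter_mem (hΞ₂F p)
      (Filter.inter_mem (hB₁F m) (hB₂F m)))))))
    obtain ⟨n, hn1, hn2, hn3, hn4, hn5, hn6, hn7, hn8⟩ := Filter.nonempty_of_mem hNmem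
    have hn1' : ∀ B : Set G, MeasurableSet B → |elemInt μ B (f₁ n) - l₁ B| ≤ σ₁ p := hn1
    have hn2' : ∀ B : Set G, MeasurableSet B → |elemInt μ B (f₂ n) - l₂ B| ≤ σ₂ p := hn2
    have hn3' : μ (A₁ n p) ≤ ENNReal.ofReal (sc₁ p) := hn3
    have hn4' : μ (A₂ n p) ≤ ENNReal.ofReal (sc₂ p) := hn4
    have hn7' : iota μ (Set.indicator (B₁ m)ᶜ fun t => α₁ • f₁ n t) ≤ r₁ m := hn7
    have hn8' : iota μ (Set.indicator (B₂ m)ᶜ fun t => α₂ • f₂ n t) ≤ r₂ m := hn8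
    obtain ⟨hf₁r, hf₁fib, S₁, hS₁m, hS₁f, hS₁o⟩ := hmem₁ n
    obtain ⟨hf₂r, hf₂fib, S₂, hS₂m, hS₂f, hS₂o⟩ := hmem₂ n
    have sp₁ : Splx (f₁ n) := ⟨hf₁r, hf₁fib⟩
    have sp₂ : Splx (f₂ n) := ⟨hf₂r, hf₂fib⟩
    set B : Set G := B₁ m ∪ B₂ m with hBdef
    have hBm : MeasurableSet B := (hB₁ m).1.union (hB₂ m).1
    have hBf : μ B < ⊤ := lt_of_le_of_lt (mu_union_le μ hμ0 hμadd (hB₁ m).1 (hB₂ m).1)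
      (ENNReal.add_lt_top.mpr ⟨(hB₁ m).2, (hB₂ m).2⟩)
    set S₀ : Set G := (S₁ ∪ S₂) ∪ B with hS₀def
    have hS₀m : MeasurableSet S₀ := (hS₁m.union hS₂m).union hBm
    have hS₀f : μ S₀ < ⊤ := lt_of_le_of_lt
      (mu_union_le μ hμ0 hμadd (hS₁m.union hS₂m) hBm)
      (ENNReal.add_lt_top.mpr ⟨lt_of_le_of_lt (mu_union_le μ hμ0 hμadd hS₁m hS₂m)
        (ENNReal.add_lt_top.mpr ⟨hS₁f, hS₂f⟩), hBf⟩)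
    have hsupp₁ : ∀ t, f₁ n t ≠ 0 → t ∈ S₀ := fun t h =>
      Or.inl (Or.inl (by by_contra hc; exact h (hS₁o t hc)))
    have hsupp₂ : ∀ t, f₂ n t ≠ 0 → t ∈ S₀ := fun t h =>
      Or.inl (Or.inr (by by_contra hc; exact h (hS₂o t hc)))
    set D : Set G := A₁ n p ∪ A₂ n p with hDdef
    have hDm : MeasurableSet D := (hA₁m n p).union (hA₂m n p)
    have hDμ : μ D ≤ ENNReal.ofReal (sc₁ p + sc₂ p) := by
      rw [ENNReal.ofReal_add (hsc₁.2.1 p) (hsc₂.2.1 p), hDdef]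
      exact (mu_union_le μ hμ0 hμadd (hA₁m n p) (hA₂m n p)).trans (add_le_add hn3' hn4')
    set g : G → X := fun t => f₁ n t - f₂ n t with hgdef
    have spg : Splx g := sp₁.comp2 sp₂ (fun a b => a - b)
    have hsuppg : ∀ t, g t ≠ 0 → t ∈ S₀ := by
      intro t h
      by_cases h1 : f₁ n t = 0
      · by_cases h2 : f₂ n t = 0
        · exact absurd (by simp [hgdef, h1, h2]) h
        · exact hsupp₂ t h2
      · exact hsupp₁ t h1
    set P₁ : Set G := A ∩ D with hP₁def
    set P₂ : Set G := (A ∩ Dᶜ) ∩ B with hP₂def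
    set P₃ : Set G := (A ∩ Dᶜ) ∩ Bᶜ with hP₃def
    have hP₁m : MeasurableSet P₁ := hA.inter hDm
    have hP₂m : MeasurableSet P₂ := (hA.inter hDm.compl).inter hBm
    have hP₃m : MeasurableSet P₃ := (hA.inter hDm.compl).inter hBm.compl
    have hsplit : ∀ t, A.indicator g t =
        (P₁.indicator g t + P₂.indicator g t) + P₃.indicator g t := by
      intro t
      by_cases h1 : t ∈ A
      · by_cases h2 : t ∈ D
        · simp [Set.indicator_apply, hP₁def, hP₂def, hP₃def, h1, h2]
        · by_cases h3 : t ∈ B <;>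
            simp [Set.indicator_apply, hP₁def, hP₂def, hP₃def, h1, h2, h3]
      · simp [Set.indicator_apply, hP₁def, hP₂def, hP₃def, h1]
    have hsupp_ind : ∀ (P : Set G) (h : G → X), (∀ t, h t ≠ 0 → t ∈ S₀) →
        ∀ t, P.indicator h t ≠ 0 → t ∈ S₀ := by
      intro P h hs t ht
      by_cases htP : t ∈ P
      · exact hs t (by rwa [Set.indicator_of_mem htP] at ht)
      · exact absurd (Set.indicator_of_notMem htP h) ht
    have habsmono : ∀ (hh : G → X) (P Q : Set G), P ⊆ Q →
        ∀ t, |P.indicator hh t| ≤ |Q.indicator hh t| := by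
      intro hh P Q hPQ t
      by_cases h : t ∈ P
      · rw [Set.indicator_of_mem h, Set.indicator_of_mem (hPQ h)]
      · rw [Set.indicator_of_notMem h, abs_zero]; exact abs_nonneg _
    have hsm : ∀ (α : ℝ) (hh : G → X) (P : Set G),
        Set.indicator P (fun t => α • hh t) = fun t => α • P.indicator hh t := by
      intro α hh P; funext t
      by_cases h : t ∈ P <;>
        simp [Set.indicator_of_mem, Set.indicator_of_notMem, h]
    have hgsub : ∀ P : Set G,
        P.indicator g = fun t => P.indicator (f₁ n) t - P.indicator (f₂ n) t := by
      intro P; funext t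
      by_cases h : t ∈ P <;>
        simp [Set.indicator_of_mem, Set.indicator_of_notMem, h, hgdef]
    -- bound on P₁ (the small-measure bad set D)
    have hwbound : ∀ (α : ℝ) (hα : 0 < α) (ff : G → X) (spf : Splx ff)
        (hsuppf : ∀ t, ff t ≠ 0 → t ∈ S₀) (W : X)
        (hW : iota μ (Set.indicator D fun t => α • ff t) ≤ W),
        iota μ (D.indicator ff) ≤ (1/α) • W := by
      intro α hα ff spf hsuppf W hW
      rw [hsm α ff D, iota_smul μ hμ0 hμadd hS₀m hS₀f hα.le (spf.indicator hDm)
        (hsupp_ind _ _ hsuppf)] at hW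
      calc iota μ (D.indicator ff) = (1/α) • (α • iota μ (D.indicator ff)) := by
            rw [smul_smul, one_div, inv_mul_cancel₀ hα.ne', one_smul]
        _ ≤ (1/α) • W := smul_le_smul_of_nonneg_left hW (by positivity)
    have hb₁ : iota μ (P₁.indicator g) ≤ (1/α₁) • w₁ p + (1/α₂) • w₂ p := by
      have h1 : iota μ (P₁.indicator g) ≤
          iota μ (P₁.indicator (f₁ n)) + iota μ (P₁.indicator (f₂ n)) := by
        rw [hgsub P₁]
        exact iota_sub_le μ hμ0 hμadd hS₀m hS₀f (sp₁.indicator hP₁m) (sp₂.indicator hP₁m)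
          (hsupp_ind _ _ hsupp₁) (hsupp_ind _ _ hsupp₂)
      have h2 : iota μ (P₁.indicator (f₁ n)) ≤ iota μ (D.indicator (f₁ n)) :=
        iota_mono μ hμ0 hμadd hS₀m hS₀f (sp₁.indicator hP₁m) (sp₁.indicator hDm)
          (hsupp_ind _ _ hsupp₁) (hsupp_ind _ _ hsupp₁)
          (habsmono _ _ _ Set.inter_subset_right)
      have h2' : iota μ (P₁.indicator (f₂ n)) ≤ iota μ (D.indicator (f₂ n)) :=
        iota_mono μ hμ0 hμadd hS₀m hS₀f (sp₂.indicator hP₁m) (sp₂.indicator hDm)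
          (hsupp_ind _ _ hsupp₂) (hsupp_ind _ _ hsupp₂)
          (habsmono _ _ _ Set.inter_subset_right)
      have h4 : iota μ (D.indicator (f₁ n)) ≤ (1/α₁) • w₁ p :=
        hwbound α₁ hα₁ (f₁ n) sp₁ hsupp₁ (w₁ p) (hΞ₁ p n hn5 D hDm hDμ)
      have h4' : iota μ (D.indicator (f₂ n)) ≤ (1/α₂) • w₂ p :=
        hwbound α₂ hα₂ (f₂ n) sp₂ hsupp₂ (w₂ p) (hΞ₂ p n hn6 D hDm hDμ)
      exact h1.trans (add_le_add (h2.trans h4) (h2'.trans h4'))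
    -- bound on P₃ (outside the big set B)
    have hcbound : ∀ (α : ℝ) (hα : 0 < α) (ff : G → X) (spf : Splx ff)
        (hsuppf : ∀ t, ff t ≠ 0 → t ∈ S₀) (C : Set G) (hCm : MeasurableSet C)
        (W : X) (hW : iota μ (Set.indicator Cᶜ fun t => α • ff t) ≤ W),
        iota μ (Cᶜ.indicator ff) ≤ (1/α) • W := by
      intro α hα ff spf hsuppf C hCm W hW
      rw [hsm α ff Cᶜ, iota_smul μ hμ0 hμadd hS₀m hS₀f hα.le (spf.indicator hCm.compl)
        (hsupp_ind _ _ hsuppf)] at hW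
      calc iota μ (Cᶜ.indicator ff) = (1/α) • (α • iota μ (Cᶜ.indicator ff)) := by
            rw [smul_smul, one_div, inv_mul_cancel₀ hα.ne', one_smul]
        _ ≤ (1/α) • W := smul_le_smul_of_nonneg_left hW (by positivity)
    have hb₃ : iota μ (P₃.indicator g) ≤ (1/α₁) • r₁ m + (1/α₂) • r₂ m := by
      have h1 : iota μ (P₃.indicator g) ≤
          iota μ (P₃.indicator (f₁ n)) + iota μ (P₃.indicator (f₂ n)) := by
        rw [hgsub P₃]
        exact iota_sub_le μ hμ0 hμadd hS₀m hS₀f (sp₁.indicator hP₃m) (sp₂.indicator hP₃m)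
          (hsupp_ind _ _ hsupp₁) (hsupp_ind _ _ hsupp₂)
      have hsub₁ : P₃ ⊆ (B₁ m)ᶜ := by
        refine Set.inter_subset_right.trans (Set.compl_subset_compl.mpr ?_)
        rw [hBdef]; exact Set.subset_union_left
      have hsub₂ : P₃ ⊆ (B₂ m)ᶜ := by
        refine Set.inter_subset_right.trans (Set.compl_subset_compl.mpr ?_)
        rw [hBdef]; exact Set.subset_union_right
      have h2 : iota μ (P₃.indicator (f₁ n)) ≤ iota μ ((B₁ m)ᶜ.indicator (f₁ n)) :=
        iota_mono μ hμ0 hμadd hS₀m hS₀f (sp₁.indicator hP₃m)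
          (sp₁.indicator (hB₁ m).1.compl)
          (hsupp_ind _ _ hsupp₁) (hsupp_ind _ _ hsupp₁) (habsmono _ _ _ hsub₁)
      have h2' : iota μ (P₃.indicator (f₂ n)) ≤ iota μ ((B₂ m)ᶜ.indicator (f₂ n)) :=
        iota_mono μ hμ0 hμadd hS₀m hS₀f (sp₂.indicator hP₃m)
          (sp₂.indicator (hB₂ m).1.compl)
          (hsupp_ind _ _ hsupp₂) (hsupp_ind _ _ hsupp₂) (habsmono _ _ _ hsub₂)
      have h4 : iota μ ((B₁ m)ᶜ.indicator (f₁ n)) ≤ (1/α₁) • r₁ m :=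
        hcbound α₁ hα₁ (f₁ n) sp₁ hsupp₁ (B₁ m) (hB₁ m).1 (r₁ m) hn7'
      have h4' : iota μ ((B₂ m)ᶜ.indicator (f₂ n)) ≤ (1/α₂) • r₂ m :=
        hcbound α₂ hα₂ (f₂ n) sp₂ hsupp₂ (B₂ m) (hB₂ m).1 (r₂ m) hn8'
      exact h1.trans (add_le_add (h2.trans h4) (h2'.trans h4'))
    -- bound on P₂ (pointwise small difference on a finite-measure set)
    have hb₂ : iota μ (P₂.indicator g) ≤ ((ε₁ p + ε₂ p) * (μ B).toReal) • e := by
      have hc : (0:ℝ) ≤ ε₁ p + ε₂ p := add_nonneg (hε₁.2.1 p) (hε₂.2.1 p)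
      have hce : (0:X) ≤ (ε₁ p + ε₂ p) • e := smul_nonneg hc he'
      have hptw : ∀ t, |P₂.indicator g t| ≤
          |P₂.indicator (fun _ => (ε₁ p + ε₂ p) • e) t| := by
        intro t
        by_cases h : t ∈ P₂
        · rw [Set.indicator_of_mem h, Set.indicator_of_mem h, abs_of_nonneg hce]
          have htD : t ∉ D := by
            rw [hP₂def] at h
            exact h.1.2
          have ht1 : |f₁ n t - f t| ≤ ε₁ p • e := by
            by_contra hcon
            exact htD (by rw [hDdef]; exact Or.inl (hA₁s n p hcon))
          have ht2 : |f₂ n t - f t| ≤ ε₂ p • e := by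
            by_contra hcon
            exact htD (by rw [hDdef]; exact Or.inr (hA₂s n p hcon))
          have hgt : g t = (f₁ n t - f t) + (f t - f₂ n t) := by
            rw [hgdef]; abel
          calc |g t| = |(f₁ n t - f t) + (f t - f₂ n t)| := by rw [hgt]
            _ ≤ |f₁ n t - f t| + |f t - f₂ n t| := abs_add_le _ _
            _ = |f₁ n t - f t| + |f₂ n t - f t| := by rw [abs_sub_comm (f t) (f₂ n t)]
            _ ≤ ε₁ p • e + ε₂ p • e := add_le_add ht1 ht2
            _ = (ε₁ p + ε₂ p) • e := (add_smul _ _ _).symm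
        · rw [Set.indicator_of_notMem h, Set.indicator_of_notMem h]
      have h1 : iota μ (P₂.indicator g) ≤
          iota μ (P₂.indicator (fun _ => (ε₁ p + ε₂ p) • e)) :=
        iota_mono μ hμ0 hμadd hS₀m hS₀f (spg.indicator hP₂m)
          ((Splx.const _).indicator hP₂m)
          (hsupp_ind _ _ hsuppg)
          (fun t ht => by
            by_cases htP : t ∈ P₂
            · refine Or.inr ?_
              rw [hP₂def] at htP
              exact htP.2
            · exact absurd (Set.indicator_of_notMem htP _) ht)
          hptw
      have h2 : iota μ (P₂.indicator (fun _ => (ε₁ p + ε₂ p) • e)) =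
          (μ P₂).toReal • ((ε₁ p + ε₂ p) • e) := by
        have habs : (fun t => |P₂.indicator (fun _ => (ε₁ p + ε₂ p) • e) t|) =
            P₂.indicator (fun _ => (ε₁ p + ε₂ p) • e) := by
          funext t
          by_cases h : t ∈ P₂
          · rw [Set.indicator_of_mem h]; exact abs_of_nonneg hce
          · rw [Set.indicator_of_notMem h]; exact abs_zero
        unfold iota
        rw [habs, elemInt_indicator, Set.univ_inter, elemInt_const μ hμ0]
      have h3 : (μ P₂).toReal • ((ε₁ p + ε₂ p) • e) ≤ ((ε₁ p + ε₂ p) * (μ B).toReal) • e := by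
        rw [smul_smul]
        refine smul_le_smul_e ?_ he'
        calc (μ P₂).toReal * (ε₁ p + ε₂ p) ≤ (μ B).toReal * (ε₁ p + ε₂ p) :=
              mul_le_mul_of_nonneg_right (ENNReal.toReal_mono hBf.ne
                (mu_mono μ hμ0 hμadd hP₂m hBm (by rw [hP₂def]; exact Set.inter_subset_right))) hc
          _ = (ε₁ p + ε₂ p) * (μ B).toReal := mul_comm _ _
      exact h1.trans (le_of_eq h2 |>.trans h3)
    -- combining the integral difference bound
    have hM0 : elemInt μ A (f₁ n) - elemInt μ A (f₂ n) = elemInt μ A g := by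
      have hneg : elemInt μ A (fun t => -(f₂ n t)) = -elemInt μ A (f₂ n) :=
        elemInt_neg μ hμ0 hμadd sp₂ hA (finfib_of μ hμ0 hμadd hS₀m hS₀f sp₂.2 hsupp₂ hA)
      have hadd : elemInt μ A (fun t => f₁ n t + (-(f₂ n t))) =
          elemInt μ A (f₁ n) + elemInt μ A (fun t => -(f₂ n t)) :=
        elemInt_add μ hμ0 hμadd sp₁ (sp₂.comp Neg.neg) hA
          (finfib_of μ hμ0 hμadd hS₀m hS₀f sp₁.2 hsupp₁ hA)
          (finfib_of μ hμ0 hμadd hS₀m hS₀f (sp₂.comp Neg.neg).2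
            (fun t ht => hsupp₂ t (fun h0 => ht (by simp [h0]))) hA)
      have hgeq : g = fun t => f₁ n t + (-(f₂ n t)) := by
        funext t; rw [hgdef]; abel
      rw [hgeq, hadd, hneg, ← sub_eq_add_neg]
    have hM1 : |elemInt μ A (f₁ n) - elemInt μ A (f₂ n)| ≤ iota μ (A.indicator g) := by
      rw [hM0]
      exact abs_elemInt_le_iota μ hμ0 hμadd hS₀m hS₀f spg hsuppg hA
    have hsupp_add : ∀ (u v : G → X), (∀ t, u t ≠ 0 → t ∈ S₀) → (∀ t, v t ≠ 0 → t ∈ S₀) →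
        ∀ t, u t + v t ≠ 0 → t ∈ S₀ := by
      intro u v hu hv t ht
      by_cases h1 : u t = 0
      · by_cases h2 : v t = 0
        · exact absurd (by rw [h1, h2, add_zero]) ht
        · exact hv t h2
      · exact hu t h1
    have hMfull : |elemInt μ A (f₁ n) - elemInt μ A (f₂ n)| ≤
        (((1/α₁) • w₁ p + (1/α₂) • w₂ p) + ((ε₁ p + ε₂ p) * (μ B).toReal) • e)
          + ((1/α₁) • r₁ m + (1/α₂) • r₂ m) := by
      refine hM1.trans ?_
      rw [show A.indicator g =
        fun t => (P₁.indicator g t + P₂.indicator g t) + P₃.indicator g t from funext hsplit]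
      have hsum12 : Splx (fun t => P₁.indicator g t + P₂.indicator g t) :=
        (spg.indicator hP₁m).comp2 (spg.indicator hP₂m) (fun a b => a + b)
      have step1 := iota_add_le μ hμ0 hμadd hS₀m hS₀f hsum12 (spg.indicator hP₃m)
        (hsupp_add _ _ (hsupp_ind _ _ hsuppg) (hsupp_ind _ _ hsuppg))
        (hsupp_ind _ _ hsuppg)
      have step2 := iota_add_le μ hμ0 hμadd hS₀m hS₀f (spg.indicator hP₁m)
        (spg.indicator hP₂m) (hsupp_ind _ _ hsuppg) (hsupp_ind _ _ hsuppg)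
      exact step1.trans (add_le_add (step2.trans (add_le_add hb₁ hb₂)) hb₃)
    calc |l₁ A - l₂ A| = |(-(elemInt μ A (f₁ n) - l₁ A)) + (elemInt μ A (f₂ n) - l₂ A)
          + (elemInt μ A (f₁ n) - elemInt μ A (f₂ n))| := by
          congr 1; abel
      _ ≤ |(-(elemInt μ A (f₁ n) - l₁ A)) + (elemInt μ A (f₂ n) - l₂ A)|
          + |elemInt μ A (f₁ n) - elemInt μ A (f₂ n)| := abs_add_le _ _
      _ ≤ (|(-(elemInt μ A (f₁ n) - l₁ A))| + |elemInt μ A (f₂ n) - l₂ A|)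
          + |elemInt μ A (f₁ n) - elemInt μ A (f₂ n)| :=
            add_le_add_left (abs_add_le _ _) _
      _ = (|elemInt μ A (f₁ n) - l₁ A| + |elemInt μ A (f₂ n) - l₂ A|)
          + |elemInt μ A (f₁ n) - elemInt μ A (f₂ n)| := by rw [abs_neg]
      _ ≤ (σ₁ p + σ₂ p) + ((((1/α₁) • w₁ p + (1/α₂) • w₂ p)
          + ((ε₁ p + ε₂ p) * (μ B).toReal) • e) + ((1/α₁) • r₁ m + (1/α₂) • r₂ m)) :=
            add_le_add (add_le_add (hn1' A hA) (hn2' A hA)) hMfull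
      _ = (σ₁ p + σ₂ p + (1/α₁) • w₁ p + (1/α₂) • w₂ p
          + ((ε₁ p + ε₂ p) * (μ B).toReal) • e) + ((1/α₁) • r₁ m + (1/α₂) • r₂ m) := by
            abel
  -- conclusion from the (o)-sequence structure
  have hR : IsOSeq (fun m => (1/α₁) • r₁ m + (1/α₂) • r₂ m) :=
    (hr₁.smulc (by positivity)).add (hr₂.smulc (by positivity))
  have hxR : ∀ m, |l₁ A - l₂ A| ≤ (1/α₁) • r₁ m + (1/α₂) • r₂ m := by
    intro m
    have hΦ : IsOSeq (fun p => σ₁ p + σ₂ p + (1/α₁) • w₁ p + (1/α₂) • w₂ p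
        + ((ε₁ p + ε₂ p) * (μ (B₁ m ∪ B₂ m)).toReal) • e) :=
      ((((hσ₁.add hσ₂).add (hw₁.smulc (by positivity))).add (hw₂.smulc (by positivity))).add
        (isOSeq_smul_e hDC ((hε₁.add hε₂).mul_const ENNReal.toReal_nonneg) he'))
    have hlb : |l₁ A - l₂ A| - ((1/α₁) • r₁ m + (1/α₂) • r₂ m) ≤ 0 := by
      refine hΦ.2.2.2 ?_
      rintro x ⟨q, rfl⟩
      exact sub_le_iff_le_add.mpr (key m q)
    exact sub_nonpos.mp hlb
  have habs0 : |l₁ A - l₂ A| ≤ 0 := by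
    refine hR.2.2.2 ?_
    rintro x ⟨m, rfl⟩
    exact hxR m
  exact sub_eq_zero.mp (eq_zero_of_abs_le_zero habs0)
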